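/- Let U ⊆ ℝ⁵ be an open set and A₁, A₂, A₃, A₄ : U → ℝ be C^∞ functions. Define the vector fields Xⁱ := ∂_{x_i} + A_i·∂_{x_5} on U for i = 1,2,3,4, and for i,j ∈ {1,2,3,4} the functions c_{ij} := ∂_{x_i}A_j − ∂_{x_j}A_i + A_i·∂_{x_5}A_j − A_j·∂_{x_5}A_i (so that [Xⁱ,Xʲ] = c_{ij}·∂_{x_5}). Let Z¹ := c_{42}·X³ + c_{34}·X² + c_{23}·X⁴. Then Z¹ has controlled divergence: there exist C^∞ functions g₂, g₃, g₄ : U → ℝ such that div(Z¹) = g₂·c_{34} + g₃·c_{42} + g₄·c_{23} on U. -/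

import Mathlib

/-- Partial derivative `∂_{x_i} g (x)` of `g : ℝ⁵ → ℝ` in the `i`-th coordinate direction. -/
noncomputable def pd5 (i : Fin 5) (g : (Fin 5 → ℝ) → ℝ) (x : Fin 5 → ℝ) : ℝ :=
  fderiv ℝ g x (Pi.single i 1)

/-- The bracket coefficients `c_{ij} = ∂_{x_i}A_j − ∂_{x_j}A_i + A_i ∂_{x_5}A_j − A_j ∂_{x_5}A_i`
(indices `i, j ∈ {1,2,3,4}` are represented by `Fin 4`, and `x₅` is coordinate `4 : Fin 5`),
so that `[Xⁱ, Xʲ] = c_{ij} ∂_{x_5}`. -/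
noncomputable def cbr5 (A : Fin 4 → (Fin 5 → ℝ) → ℝ) (i j : Fin 4) (x : Fin 5 → ℝ) : ℝ :=
  pd5 i.castSucc (A j) x - pd5 j.castSucc (A i) x
    + A i x * pd5 4 (A j) x - A j x * pd5 4 (A i) x

/-- The vector field `Xⁱ = ∂_{x_i} + A_i ∂_{x_5}` on `ℝ⁵` (for `i ∈ {1,2,3,4}`). -/
noncomputable def XF5 (A : Fin 4 → (Fin 5 → ℝ) → ℝ) (i : Fin 4) (x : Fin 5 → ℝ) :
    Fin 5 → ℝ :=
  (Pi.single i.castSucc 1 : Fin 5 → ℝ) + A i x • (Pi.single (4 : Fin 5) 1 : Fin 5 → ℝ)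

/-- The vector field `Z¹ = c_{42}·X³ + c_{34}·X² + c_{23}·X⁴` (0-based indices). -/
noncomputable def ZF5 (A : Fin 4 → (Fin 5 → ℝ) → ℝ) (x : Fin 5 → ℝ) : Fin 5 → ℝ :=
  cbr5 A 3 1 x • XF5 A 2 x + cbr5 A 2 3 x • XF5 A 1 x + cbr5 A 1 2 x • XF5 A 3 x

/-- The divergence `div(Z)(x) = ∑ₖ ∂_{x_k} Z_k(x)` of a vector field `Z` on `ℝ⁵`. -/
noncomputable def div5 (Z : (Fin 5 → ℝ) → (Fin 5 → ℝ)) (x : Fin 5 → ℝ) : ℝ :=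
  ∑ k : Fin 5, fderiv ℝ (fun y => Z y k) x (Pi.single k 1)

/-- for smooth `A₁,A₂,A₃,A₄` on an open `U ⊆ ℝ⁵` and
`Z¹ = c_{42}·X³ + c_{34}·X² + c_{23}·X⁴`, the divergence of `Z¹` lies in the ideal generated by
`c_{34}, c_{42}, c_{23}`: there are smooth `g₂,g₃,g₄` with
`div(Z¹) = g₂·c_{34} + g₃·c_{42} + g₄·c_{23}` on `U`. -/
theorem controlled_divergence_dim5 (U : Set (Fin 5 → ℝ)) (hU : IsOpen U)
    (A : Fin 4 → (Fin 5 → ℝ) → ℝ)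
    (hA : ∀ i, ContDiffOn ℝ (⊤ : ℕ∞) (A i) U) :
    ∃ g₂ g₃ g₄ : (Fin 5 → ℝ) → ℝ,
      ContDiffOn ℝ (⊤ : ℕ∞) g₂ U ∧ ContDiffOn ℝ (⊤ : ℕ∞) g₃ U ∧
      ContDiffOn ℝ (⊤ : ℕ∞) g₄ U ∧
      ∀ x ∈ U, div5 (ZF5 A) x =
        g₂ x * cbr5 A 2 3 x + g₃ x * cbr5 A 3 1 x + g₄ x * cbr5 A 1 2 x := by
  have hsmooth : ∀ i : Fin 4, ContDiffOn ℝ (⊤ : ℕ∞)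
      (fun y => 2 * pd5 4 (A i) y) U := by
    intro i x hx
    have h : ContDiffAt ℝ (⊤:ℕ∞) (A i) x := (hA i).contDiffAt (hU.mem_nhds hx)
    exact (contDiffAt_const.mul
      ((h.fderiv_right (m := (⊤:ℕ∞)) (by norm_cast)).clm_apply
        contDiffAt_const)).contDiffWithinAt
  refine ⟨fun y => 2 * pd5 4 (A 1) y, fun y => 2 * pd5 4 (A 2) y,
    fun y => 2 * pd5 4 (A 3) y, hsmooth 1, hsmooth 2, hsmooth 3, ?_⟩
  intro x hx
  have hAx : ∀ i : Fin 4, ContDiffAt ℝ (⊤:ℕ∞) (A i) x :=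
    fun i => (hA i).contDiffAt (hU.mem_nhds hx)
  have hdA : ∀ i : Fin 4, DifferentiableAt ℝ (A i) x :=
    fun i => (hAx i).differentiableAt (by norm_cast)
  have hP : ∀ (i : Fin 4) (v : Fin 5 → ℝ),
      DifferentiableAt ℝ (fun y => fderiv ℝ (A i) y v) x := fun i v =>
    (((hAx i).fderiv_right (m := (⊤:ℕ∞)) (by norm_cast)).clm_apply
      contDiffAt_const).differentiableAt (by norm_cast)
  have hsym : ∀ (i : Fin 4) (v w : Fin 5 → ℝ),
      fderiv ℝ (fun y => fderiv ℝ (A i) y v) x w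
        = fderiv ℝ (fun y => fderiv ℝ (A i) y w) x v := by
    intro i v w
    have hd : DifferentiableAt ℝ (fderiv ℝ (A i)) x :=
      ((hAx i).fderiv_right (m := (⊤:ℕ∞)) (by norm_cast)).differentiableAt
        (by norm_cast)
    have h1 : ∀ u : Fin 5 → ℝ, fderiv ℝ (fun y => fderiv ℝ (A i) y u) x
        = (fderiv ℝ (fderiv ℝ (A i)) x).flip u := by
      intro u
      rw [fderiv_clm_apply hd (differentiableAt_const u)]
      simp
    rw [h1, h1]
    exact ((hAx i).isSymmSndFDerivAt (by rw [minSmoothness_of_isRCLikeNormedField]; exact WithTop.coe_le_coe.mpr (le_top : (2:ℕ∞) ≤ ⊤))).eq w v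
  -- derivative of cbr5
  have hcbrD : ∀ i j : Fin 4, HasFDerivAt (cbr5 A i j)
      (((fderiv ℝ (fun y => fderiv ℝ (A j) y (Pi.single i.castSucc 1)) x
          - fderiv ℝ (fun y => fderiv ℝ (A i) y (Pi.single j.castSucc 1)) x)
        + (A i x • fderiv ℝ (fun y => fderiv ℝ (A j) y (Pi.single 4 1)) x
          + fderiv ℝ (A j) x (Pi.single 4 1) • fderiv ℝ (A i) x))
        - (A j x • fderiv ℝ (fun y => fderiv ℝ (A i) y (Pi.single 4 1)) x
          + fderiv ℝ (A i) x (Pi.single 4 1) • fderiv ℝ (A j) x)) x := by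
    intro i j
    exact ((((hP j (Pi.single i.castSucc 1)).hasFDerivAt.sub
        (hP i (Pi.single j.castSucc 1)).hasFDerivAt).add
      ((hdA i).hasFDerivAt.mul (hP j (Pi.single 4 1)).hasFDerivAt)).sub
      ((hdA j).hasFDerivAt.mul (hP i (Pi.single 4 1)).hasFDerivAt))
  have hcbrDiff : ∀ i j : Fin 4, DifferentiableAt ℝ (cbr5 A i j) x :=
    fun i j => (hcbrD i j).differentiableAt
  -- components of ZF5
  have hZ0 : (fun y => ZF5 A y 0) = fun _ => (0:ℝ) := by
    funext y; simp [ZF5, XF5, Pi.single_apply,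
      show Fin.castSucc (2:Fin 4) = (2:Fin 5) from rfl,
      show Fin.castSucc (1:Fin 4) = (1:Fin 5) from rfl,
      show Fin.castSucc (3:Fin 4) = (3:Fin 5) from rfl]
  have hZ1 : (fun y => ZF5 A y 1) = cbr5 A 2 3 := by
    funext y; simp [ZF5, XF5, Pi.single_apply,
      show Fin.castSucc (2:Fin 4) = (2:Fin 5) from rfl,
      show Fin.castSucc (1:Fin 4) = (1:Fin 5) from rfl,
      show Fin.castSucc (3:Fin 4) = (3:Fin 5) from rfl]
  have hZ2 : (fun y => ZF5 A y 2) = cbr5 A 3 1 := by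
    funext y; simp [ZF5, XF5, Pi.single_apply,
      show Fin.castSucc (2:Fin 4) = (2:Fin 5) from rfl,
      show Fin.castSucc (1:Fin 4) = (1:Fin 5) from rfl,
      show Fin.castSucc (3:Fin 4) = (3:Fin 5) from rfl]
  have hZ3 : (fun y => ZF5 A y 3) = cbr5 A 1 2 := by
    funext y; simp [ZF5, XF5, Pi.single_apply,
      show Fin.castSucc (2:Fin 4) = (2:Fin 5) from rfl,
      show Fin.castSucc (1:Fin 4) = (1:Fin 5) from rfl,
      show Fin.castSucc (3:Fin 4) = (3:Fin 5) from rfl]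
  have hZ4 : (fun y => ZF5 A y 4) =
      fun y => cbr5 A 3 1 y * A 2 y + cbr5 A 2 3 y * A 1 y + cbr5 A 1 2 y * A 3 y := by
    funext y; simp [ZF5, XF5, Pi.single_apply,
      show Fin.castSucc (2:Fin 4) = (2:Fin 5) from rfl,
      show Fin.castSucc (1:Fin 4) = (1:Fin 5) from rfl,
      show Fin.castSucc (3:Fin 4) = (3:Fin 5) from rfl]
  have h4 := (((hcbrD 3 1).mul (hdA 2).hasFDerivAt).add
      ((hcbrD 2 3).mul (hdA 1).hasFDerivAt)).add
      ((hcbrD 1 2).mul (hdA 3).hasFDerivAt)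
  rw [div5, Fin.sum_univ_five, hZ0, hZ1, hZ2, hZ3, hZ4,
    (hcbrD 2 3).fderiv, (hcbrD 3 1).fderiv, (hcbrD 1 2).fderiv, (show HasFDerivAt (fun y => cbr5 A 3 1 y * A 2 y + cbr5 A 2 3 y * A 1 y + cbr5 A 1 2 y * A 3 y) _ x from h4).fderiv]
  simp only [fderiv_fun_const, Pi.zero_apply, ContinuousLinearMap.zero_apply,
    ContinuousLinearMap.add_apply, ContinuousLinearMap.sub_apply,
    ContinuousLinearMap.smul_apply, smul_eq_mul, cbr5, pd5,
    show Fin.castSucc (2:Fin 4) = (2:Fin 5) from rfl,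
    show Fin.castSucc (1:Fin 4) = (1:Fin 5) from rfl,
    show Fin.castSucc (3:Fin 4) = (3:Fin 5) from rfl]
  rw [hsym 3 (Pi.single 1 1) (Pi.single 2 1),
    hsym 2 (Pi.single 1 1) (Pi.single 3 1),
    hsym 1 (Pi.single 2 1) (Pi.single 3 1),
    hsym 1 (Pi.single 3 1) (Pi.single 4 1),
    hsym 3 (Pi.single 1 1) (Pi.single 4 1),
    hsym 3 (Pi.single 2 1) (Pi.single 4 1),
    hsym 2 (Pi.single 3 1) (Pi.single 4 1),
    hsym 2 (Pi.single 1 1) (Pi.single 4 1),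
    hsym 1 (Pi.single 2 1) (Pi.single 4 1)]
  ring
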